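/- For every bounded linear operator A on a complex Hilbert space, w(A)² ≤ (1/4)‖ A*A + AA* ‖ + (1/2) w(|A| · |A*|), where |A| = (A*A)^{1/2} and |A*| = (AA*)^{1/2}. -/

import Mathlib

open ContinuousLinearMap

set_option maxHeartbeats 4000000
set_option synthInstance.maxHeartbeats 1000000

section Helpers

/-- commuting with a unit implies commuting with its inverse -/
private lemma comm_inv' {M : Type*} [Monoid M] {u v w : M} (huv : u * v = 1)
    (hvu : v * u = 1) (h : w * u = u * w) : w * v = v * w := by
  calc w * v = v * u * (w * v) := by rw [hvu, one_mul]
    _ = v * (w * u) * v := by rw [h]; simp [mul_assoc]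
    _ = v * w * (u * v) := by simp [mul_assoc]
    _ = v * w := by rw [huv, mul_one]

variable {H : Type*} [NormedAddCommGroup H] [InnerProductSpace ℂ H]

local notation "⟪" x ", " y "⟫" => @inner ℂ H _ x y

/-- Buzano's inequality. -/
private lemma buzano (u v x : H) (hx : ‖x‖ = 1) :
    ‖⟪u, x⟫ * ⟪x, v⟫‖ ≤ (‖u‖ * ‖v‖ + ‖⟪u, v⟫‖) / 2 := by
  set y : H := (2 * ⟪x, u⟫) • x - u with hy
  have hyv : ⟪y, v⟫ = 2 * ⟪u, x⟫ * ⟪x, v⟫ - ⟪u, v⟫ := by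
    rw [hy, inner_sub_left, inner_smul_left, map_mul, ← inner_conj_symm u x]
    norm_num [mul_assoc, Complex.conj_ofNat]
  have hynorm : ‖y‖ = ‖u‖ := by
    have h2 : ‖y‖ ^ 2 = ‖u‖ ^ 2 := by
      rw [hy, @norm_sub_sq ℂ]
      have h1 : ‖(2 * ⟪x, u⟫) • x‖ ^ 2 = 4 * ‖⟪x, u⟫‖ ^ 2 := by
        rw [norm_smul, hx, mul_one, norm_mul]
        norm_num [mul_pow]
      have h3 : RCLike.re ⟪(2 * ⟪x, u⟫) • x, u⟫ = 2 * ‖⟪x, u⟫‖ ^ 2 := by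
        rw [inner_smul_left]
        have : (starRingEnd ℂ) (2 * ⟪x, u⟫) * ⟪x, u⟫
            = 2 * ((‖⟪x, u⟫‖ : ℂ) ^ 2 : ℂ) := by
          rw [map_mul, mul_assoc, RCLike.conj_mul]
          norm_num [Complex.conj_ofNat]
        rw [this]
        simp [← Complex.ofReal_pow]
      rw [h1, h3]; ring
    nlinarith [norm_nonneg y, norm_nonneg u]
  have key : 2 * ‖⟪u, x⟫ * ⟪x, v⟫‖ ≤ ‖u‖ * ‖v‖ + ‖⟪u, v⟫‖ := by
    have : (2 : ℂ) * ⟪u, x⟫ * ⟪x, v⟫ = ⟪y, v⟫ + ⟪u, v⟫ := by rw [hyv]; ring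
    calc 2 * ‖⟪u, x⟫ * ⟪x, v⟫‖ = ‖(2:ℂ) * ⟪u, x⟫ * ⟪x, v⟫‖ := by
          rw [mul_assoc, norm_mul]; simp
      _ = ‖⟪y, v⟫ + ⟪u, v⟫‖ := by rw [this]
      _ ≤ ‖⟪y, v⟫‖ + ‖⟪u, v⟫‖ := norm_add_le _ _
      _ ≤ ‖y‖ * ‖v‖ + ‖⟪u, v⟫‖ := by gcongr; exact norm_inner_le_norm y v
      _ = ‖u‖ * ‖v‖ + ‖⟪u, v⟫‖ := by rw [hynorm]
  linarith

end Helpers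


section Core

variable {H : Type*} [NormedAddCommGroup H] [InnerProductSpace ℂ H] [CompleteSpace H]

local notation "⟪" x ", " y "⟫" => @inner ℂ H _ x y

private lemma isUnit_aux (T : H →L[ℂ] H) (hT : IsSelfAdjoint T) (ε : ℝ) (hε : 0 < ε) :
    IsUnit (T * T + (ε : ℂ) • 1) := by
  have h0 : (0 : H →L[ℂ] H) ≤ T * T := by
    have := star_mul_self_nonneg T
    rwa [hT.star_eq] at this
  have hs : ∀ x ∈ spectrum ℝ (T * T), 0 ≤ x := spectrum_nonneg_of_nonneg h0
  have hne : (-ε) ∉ spectrum ℝ (T * T) := fun h => absurd (hs _ h) (by linarith)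
  rw [spectrum.notMem_iff] at hne
  have he : algebraMap ℝ (H →L[ℂ] H) (-ε) - T * T = -(T * T + (ε : ℂ) • 1) := by
    rw [Algebra.algebraMap_eq_smul_one, neg_smul, ← Complex.coe_smul]
    abel
  rw [he] at hne
  exact (IsUnit.neg_iff _).mp hne

private lemma star_inv_aux {u : H →L[ℂ] H} (hu : IsUnit u) (hsu : star u = u) :
    star (↑hu.unit⁻¹ : H →L[ℂ] H) = ↑hu.unit⁻¹ := by
  set v : H →L[ℂ] H := ↑hu.unit⁻¹ with hv
  have huv : u * v = 1 := hu.mul_val_inv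
  have h1 : star v * u = 1 := by
    calc star v * u = star (u * v) := by rw [star_mul, hsu]
      _ = 1 := by rw [huv, star_one]
  calc star v = star v * (u * v) := by rw [huv, mul_one]
    _ = star v * u * v := by rw [mul_assoc]
    _ = v := by rw [h1, one_mul]

private lemma mixed_schwarz (A P Q : H →L[ℂ] H)
    (hP : P.IsPositive) (hP2 : P * P = adjoint A * A)
    (hQ : Q.IsPositive) (hQ2 : Q * Q = A * adjoint A) (x : H) (hx : ‖x‖ = 1) :
    ‖(⟪A x, x⟫ : ℂ)‖ ^ 2 ≤ RCLike.re (⟪P x, x⟫ : ℂ) * RCLike.re (⟪Q x, x⟫ : ℂ) := by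
  set a' := adjoint A with ha'
  have hPsa : IsSelfAdjoint P := hP.isSelfAdjoint
  have hQsa : IsSelfAdjoint Q := hQ.isSelfAdjoint
  have hP0 : (0 : H →L[ℂ] H) ≤ P := (ContinuousLinearMap.nonneg_iff_isPositive P).mpr hP
  have hQ0 : (0 : H →L[ℂ] H) ≤ Q := (ContinuousLinearMap.nonneg_iff_isPositive Q).mpr hQ
  have hPadj : adjoint P = P := hPsa.adjoint_eq
  have hQadj : adjoint Q = Q := hQsa.adjoint_eq
  have Psym : ∀ z w : H, ⟪P z, w⟫ = ⟪z, P w⟫ := fun z w => by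
    conv_lhs => rw [← hPadj]
    exact adjoint_inner_left P w z
  have Qsym : ∀ z w : H, ⟪Q z, w⟫ = ⟪z, Q w⟫ := fun z w => by
    conv_lhs => rw [← hQadj]
    exact adjoint_inner_left Q w z
  set p := RCLike.re (⟪P x, x⟫ : ℂ) with hp
  set q := RCLike.re (⟪Q x, x⟫ : ℂ) with hq
  have hp0 : 0 ≤ p := hP.re_inner_nonneg_left x
  have hq0 : 0 ≤ q := hQ.re_inner_nonneg_left x
  -- square roots
  set R := CFC.sqrt P with hR
  set S := CFC.sqrt Q with hS
  have hR0 : (0 : H →L[ℂ] H) ≤ R := CFC.sqrt_nonneg P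
  have hS0 : (0 : H →L[ℂ] H) ≤ S := CFC.sqrt_nonneg Q
  have hR2 : R * R = P := CFC.sqrt_mul_sqrt_self P hP0
  have hS2 : S * S = Q := CFC.sqrt_mul_sqrt_self Q hQ0
  have hRsa : IsSelfAdjoint R := IsSelfAdjoint.of_nonneg hR0
  have hSsa : IsSelfAdjoint S := IsSelfAdjoint.of_nonneg hS0
  have Rsym : ∀ z w : H, ⟪R z, w⟫ = ⟪z, R w⟫ := fun z w => by
    conv_lhs => rw [← hRsa.adjoint_eq]
    exact adjoint_inner_left R w z
  have LR : ∀ z : H →L[ℂ] H, R * (R * z) = P * z := fun z => by rw [← mul_assoc, hR2]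
  have LS : ∀ z : H →L[ℂ] H, S * (S * z) = Q * z := fun z => by rw [← mul_assoc, hS2]
  -- key intertwining facts
  have key0 : A * (P * P) = (Q * Q) * A := by rw [hP2, hQ2, mul_assoc]
  have K2 : ∀ z : H →L[ℂ] H, a' * (A * z) = P * (P * z) := fun z => by
    rw [← mul_assoc, ← hP2, mul_assoc]
  have K3 : A * a' = Q * Q := hQ2.symm
  have L2 : ∀ z : H →L[ℂ] H, A * (P * (P * z)) = Q * (Q * (A * z)) := fun z => by
    have h := congrArg (· * z) key0
    simpa only [mul_assoc] using h
  -- E4 : A * (P * a') = Q * (Q * Q)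
  have hb : (0 : H →L[ℂ] H) ≤ A * (P * a') := by
    have h := star_mul_self_nonneg (R * a')
    have heq : star (R * a') * (R * a') = A * (P * a') := by
      rw [star_mul, ha', ← star_eq_adjoint, star_star, hRsa.star_eq]
      rw [star_eq_adjoint, ← ha']
      simp only [mul_assoc]
      rw [LR]
    rwa [heq] at h
  have hq3 : (0 : H →L[ℂ] H) ≤ Q * (Q * Q) := by
    have h := star_mul_self_nonneg (S * (S * S))
    have heq : star (S * (S * S)) * (S * (S * S)) = Q * (Q * Q) := by
      rw [star_mul, star_mul, hSsa.star_eq]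
      simp only [mul_assoc]
      rw [LS, LS, hS2]
    rwa [heq] at h
  have sq_eq : (A * (P * a')) * (A * (P * a')) = (Q * (Q * Q)) * (Q * (Q * Q)) := by
    simp only [mul_assoc]
    rw [K2, L2, L2, K3]
  have E4 : A * (P * a') = Q * (Q * Q) := by
    have h1 : CFC.sqrt ((A * (P * a')) * (A * (P * a'))) = A * (P * a') :=
      CFC.sqrt_mul_self _ hb
    have h2 : CFC.sqrt ((Q * (Q * Q)) * (Q * (Q * Q))) = Q * (Q * Q) :=
      CFC.sqrt_mul_self _ hq3
    rw [← h1, sq_eq, h2]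
  -- the ε-approximation step
  suffices hstep : ∀ ε : ℝ, 0 < ε →
      ‖(⟪A x, x⟫ : ℂ)‖ ≤ Real.sqrt p * Real.sqrt q + Real.sqrt ε / 2 by
    have h1 : ‖(⟪A x, x⟫ : ℂ)‖ ≤ Real.sqrt p * Real.sqrt q := by
      refine le_of_forall_pos_le_add fun δ hδ => ?_
      have h := hstep (4 * δ ^ 2) (by positivity)
      rwa [show (4 * δ ^ 2 : ℝ) = (2 * δ) ^ 2 by ring, Real.sqrt_sq (by positivity),
        show 2 * δ / 2 = δ by ring] at h
    calc ‖(⟪A x, x⟫ : ℂ)‖ ^ 2 ≤ (Real.sqrt p * Real.sqrt q) ^ 2 :=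
          pow_le_pow_left₀ (norm_nonneg _) h1 2
      _ = p * q := by rw [mul_pow, Real.sq_sqrt hp0, Real.sq_sqrt hq0]
  intro ε hε
  set c : ℂ := (ε : ℂ) with hc
  set uP : H →L[ℂ] H := P * P + c • 1 with huPdef
  set uQ : H →L[ℂ] H := Q * Q + c • 1 with huQdef
  have huP : IsUnit uP := isUnit_aux P hPsa ε hε
  have huQ : IsUnit uQ := isUnit_aux Q hQsa ε hε
  set vP : H →L[ℂ] H := ↑huP.unit⁻¹ with hvPdef
  set vQ : H →L[ℂ] H := ↑huQ.unit⁻¹ with hvQdef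
  have huvP : uP * vP = 1 := huP.mul_val_inv
  have hvuP : vP * uP = 1 := huP.val_inv_mul
  have huvQ : uQ * vQ = 1 := huQ.mul_val_inv
  have hvuQ : vQ * uQ = 1 := huQ.val_inv_mul
  have scc : star c = c := by rw [hc, Complex.star_def, Complex.conj_ofReal]
  have suP : star uP = uP := by
    rw [huPdef, star_add, star_mul, hPsa.star_eq, star_smul, star_one, scc]
  have suQ : star uQ = uQ := by
    rw [huQdef, star_add, star_mul, hQsa.star_eq, star_smul, star_one, scc]
  have svP : star vP = vP := star_inv_aux huP suP
  have svQ : star vQ = vQ := star_inv_aux huQ suQ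
  have vPsym : ∀ z w : H, ⟪vP z, w⟫ = ⟪z, vP w⟫ := fun z w => by
    have : adjoint vP = vP := by rw [← star_eq_adjoint, svP]
    conv_lhs => rw [← this]
    exact adjoint_inner_left vP w z
  have vQsym : ∀ z w : H, ⟪vQ z, w⟫ = ⟪z, vQ w⟫ := fun z w => by
    have : adjoint vQ = vQ := by rw [← star_eq_adjoint, svQ]
    conv_lhs => rw [← this]
    exact adjoint_inner_left vQ w z
  have uQsym : ∀ z w : H, ⟪uQ z, w⟫ = ⟪z, uQ w⟫ := fun z w => by
    have : adjoint uQ = uQ := by rw [← star_eq_adjoint, suQ]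
    conv_lhs => rw [← this]
    exact adjoint_inner_left uQ w z
  -- commutation
  have hPuP : P * uP = uP * P := by
    rw [huPdef]
    simp only [mul_add, add_mul, mul_smul_comm, smul_mul_assoc, mul_one, one_mul, mul_assoc]
  have hQuQ : Q * uQ = uQ * Q := by
    rw [huQdef]
    simp only [mul_add, add_mul, mul_smul_comm, smul_mul_assoc, mul_one, one_mul, mul_assoc]
  have hPvP : P * vP = vP * P := comm_inv' huvP hvuP hPuP
  have hQvQ : Q * vQ = vQ * Q := comm_inv' huvQ hvuQ hQuQ
  have keyu : A * uP = uQ * A := by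
    rw [huPdef, huQdef]
    simp only [mul_add, add_mul, mul_smul_comm, smul_mul_assoc, mul_one, one_mul]
    rw [key0]
  have keyv : A * vP = vQ * A := by
    have h : vQ * (A * uP) * vP = vQ * (uQ * A) * vP := by rw [keyu]
    have l : vQ * (A * uP) * vP = vQ * A := by
      rw [mul_assoc, mul_assoc A uP vP, huvP, mul_one]
    have r : vQ * (uQ * A) * vP = A * vP := by
      rw [← mul_assoc, hvuQ, one_mul]
    rw [← r, ← h, l]
  have L1 : ∀ z : H →L[ℂ] H, A * (vP * z) = vQ * (A * z) := fun z => by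
    rw [← mul_assoc, keyv, mul_assoc]
  have L3 : ∀ z : H →L[ℂ] H, P * (vP * z) = vP * (P * z) := fun z => by
    rw [← mul_assoc, hPvP, mul_assoc]
  have L5 : ∀ z : H →L[ℂ] H, Q * (vQ * z) = vQ * (Q * z) := fun z => by
    rw [← mul_assoc, hQvQ, mul_assoc]
  -- generic inner-product moves
  have moveL : ∀ (B : H →L[ℂ] H) (z w : H), ⟪B z, w⟫ = ⟪z, star B w⟫ := fun B z w => by
    rw [star_eq_adjoint]
    exact (adjoint_inner_right B z w).symm
  -- the approximant T and its key property
  set T : H →L[ℂ] H := A * (vP * (P * R)) with hT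
  have sT : star T = R * (P * (vP * a')) := by
    rw [hT, star_mul, star_mul, star_mul, hRsa.star_eq, hPsa.star_eq, svP,
      star_eq_adjoint, ← ha']
    simp only [mul_assoc]
  have hTT : T * star T = vQ * (Q * (Q * (Q * (Q * (Q * vQ))))) := by
    rw [sT, hT]
    simp only [mul_assoc]
    rw [LR, L1, L2, L3, L1, E4]
    simp only [hQvQ, L5]
  -- decomposition of A
  have hdec : A = (A * vP) * (P * P) + c • (A * vP) := by
    conv_lhs => rw [← mul_one A, ← hvuP, ← mul_assoc]
    rw [huPdef, mul_add, mul_smul_comm, mul_one]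
  have hsplit : (⟪A x, x⟫ : ℂ) = ⟪((A * vP) * (P * P)) x, x⟫ + ⟪(c • (A * vP)) x, x⟫ := by
    conv_lhs => rw [hdec]
    simp [ContinuousLinearMap.add_apply, inner_add_left]
  set z := vP x with hz
  have hxz : uP z = x := by
    have h : uP (vP x) = (uP * vP) x := (ContinuousLinearMap.mul_apply uP vP x).symm
    rw [huvP] at h
    simpa using h
  have hAnorm : ∀ w : H, ‖A w‖ = ‖P w‖ := fun w => by
    have e1 : ⟪A w, A w⟫ = ⟪(P * P) w, w⟫ := by
      have h := adjoint_inner_left A w (A w)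
      rw [← ha'] at h
      rw [← h, ← ContinuousLinearMap.mul_apply, ← hP2]
    have e2 : ⟪P w, P w⟫ = ⟪(P * P) w, w⟫ := by
      have h := adjoint_inner_left P w (P w)
      rw [hPadj] at h
      rw [← h, ← ContinuousLinearMap.mul_apply]
    have h1 : ‖A w‖ ^ 2 = ‖P w‖ ^ 2 := by
      rw [← inner_self_eq_norm_sq (𝕜 := ℂ), ← inner_self_eq_norm_sq (𝕜 := ℂ), e1, e2]
    have h2 := congrArg Real.sqrt h1
    rwa [Real.sqrt_sq (norm_nonneg _), Real.sqrt_sq (norm_nonneg _)] at h2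
  -- bound on the error term
  have hterm2 : ‖(⟪(c • (A * vP)) x, x⟫ : ℂ)‖ ≤ Real.sqrt ε / 2 := by
    have happ : (c • (A * vP)) x = c • (A z) := by
      simp [hz, ContinuousLinearMap.smul_apply, ContinuousLinearMap.mul_apply]
    have h0 : ‖(⟪(c • (A * vP)) x, x⟫ : ℂ)‖ ≤ ε * ‖P z‖ := by
      calc ‖(⟪(c • (A * vP)) x, x⟫ : ℂ)‖ ≤ ‖(c • (A * vP)) x‖ * ‖x‖ := norm_inner_le_norm _ _
        _ = ‖c • A z‖ := by rw [happ, hx, mul_one]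
        _ = ε * ‖P z‖ := by
            rw [norm_smul, hAnorm, hc]
            simp [abs_of_pos hε]
    have hupz : uP z = P (P z) + c • z := by
      rw [huPdef]
      simp [ContinuousLinearMap.add_apply, ContinuousLinearMap.mul_apply,
        ContinuousLinearMap.smul_apply]
    have e2 : RCLike.re (⟪P (P z), c • z⟫ : ℂ) = ε * ‖P z‖ ^ 2 := by
      rw [inner_smul_right, Psym (P z) z, hc]
      simp [Complex.re_ofReal_mul, inner_self_eq_norm_sq, ← Complex.ofReal_pow]
    have h2 : (1 : ℝ) = ‖P (P z)‖ ^ 2 + 2 * (ε * ‖P z‖ ^ 2) + ε ^ 2 * ‖z‖ ^ 2 := by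
      have hnx : ‖uP z‖ = 1 := by rw [hxz, hx]
      have hns : ‖P (P z) + c • z‖ ^ 2
          = ‖P (P z)‖ ^ 2 + 2 * (ε * ‖P z‖ ^ 2) + ε ^ 2 * ‖z‖ ^ 2 := by
        rw [@norm_add_sq ℂ, e2, norm_smul, hc]
        have : ‖(ε : ℂ)‖ = ε := by simp [abs_of_pos hε]
        rw [this, mul_pow]
      rw [← hns, ← hupz, hnx, one_pow]
    have hCS : ‖P z‖ ^ 2 ≤ ‖P (P z)‖ * ‖z‖ := by
      calc ‖P z‖ ^ 2 = RCLike.re (⟪P z, P z⟫ : ℂ) := (inner_self_eq_norm_sq _).symm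
        _ = RCLike.re (⟪P (P z), z⟫ : ℂ) := by rw [Psym (P z) z]
        _ ≤ ‖(⟪P (P z), z⟫ : ℂ)‖ := RCLike.re_le_norm _
        _ ≤ ‖P (P z)‖ * ‖z‖ := norm_inner_le_norm _ _
    have hsq : (ε * ‖P z‖) ^ 2 ≤ (Real.sqrt ε / 2) ^ 2 := by
      rw [div_pow, Real.sq_sqrt hε.le]
      nlinarith [sq_nonneg (‖P (P z)‖ - ε * ‖z‖), norm_nonneg (P z), norm_nonneg z,
        norm_nonneg (P (P z)), hε.le,
        mul_le_mul_of_nonneg_left hCS (by positivity : (0:ℝ) ≤ 2 * ε)]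
    have hfin : ε * ‖P z‖ ≤ Real.sqrt ε / 2 := by
      have h := Real.sqrt_le_sqrt hsq
      rwa [Real.sqrt_sq (by positivity), Real.sqrt_sq (by positivity)] at h
    exact h0.trans hfin
  -- bound on the main term
  have hfac : (A * vP) * (P * P) = T * R := by
    rw [hT]
    simp only [mul_assoc]
    rw [hR2]
  have ht1a : (⟪((A * vP) * (P * P)) x, x⟫ : ℂ) = ⟪R x, star T x⟫ := by
    rw [hfac, ContinuousLinearMap.mul_apply, moveL T (R x) x]
  have hRxnorm : ‖R x‖ = Real.sqrt p := by
    have h1 : ‖R x‖ ^ 2 = p := by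
      rw [← inner_self_eq_norm_sq (𝕜 := ℂ)]
      rw [Rsym x (R x)]
      have hRR : R (R x) = P x := by rw [← ContinuousLinearMap.mul_apply, hR2]
      rw [hRR, hp, inner_re_symm]
    rw [← h1, Real.sqrt_sq (norm_nonneg _)]
  have hTxnorm : ‖star T x‖ ≤ Real.sqrt q := by
    set y := vQ x with hy
    have h1 : ‖star T x‖ ^ 2 = RCLike.re (⟪Q (Q (Q (Q (Q y)))), y⟫ : ℂ) := by
      rw [← inner_self_eq_norm_sq (𝕜 := ℂ)]
      have e : ⟪star T x, star T x⟫ = ⟪x, (T * star T) x⟫ := by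
        rw [moveL (star T) x (star T x), star_star, ← ContinuousLinearMap.mul_apply]
      rw [e, inner_re_symm, hTT]
      have happ : (vQ * (Q * (Q * (Q * (Q * (Q * vQ)))))) x = vQ (Q (Q (Q (Q (Q y))))) := by
        simp [ContinuousLinearMap.mul_apply, hy]
      rw [happ, vQsym (Q (Q (Q (Q (Q y))))) x]
    have hxy : uQ y = x := by
      have h : uQ (vQ x) = (uQ * vQ) x := (ContinuousLinearMap.mul_apply uQ vQ x).symm
      rw [huvQ] at h
      simpa [hy] using h
    have hq' : q = RCLike.re (⟪(uQ * (Q * uQ)) y, y⟫ : ℂ) := by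
      rw [hq]
      conv_lhs => rw [← hxy]
      rw [(uQsym (Q (uQ y)) y).symm]
      simp [ContinuousLinearMap.mul_apply]
    have hc2 : ((2 * ε : ℝ) : ℂ) = 2 * c := by rw [hc]; push_cast; ring
    have hcsq : ((ε ^ 2 : ℝ) : ℂ) = c * c := by rw [hc]; push_cast; ring
    have hexp : uQ * (Q * uQ)
        = Q * (Q * (Q * (Q * Q))) + ((2 * ε : ℝ) : ℂ) • (Q * (Q * Q))
          + ((ε ^ 2 : ℝ) : ℂ) • Q := by
      rw [huQdef, hc2, hcsq]
      simp only [mul_add, add_mul, mul_smul_comm, smul_mul_assoc, smul_smul,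
        mul_one, one_mul, smul_add, mul_assoc]
      module
    have h2 : q = RCLike.re (⟪(Q * (Q * (Q * (Q * Q)))) y, y⟫ : ℂ)
        + 2 * ε * RCLike.re (⟪(Q * (Q * Q)) y, y⟫ : ℂ)
        + ε ^ 2 * RCLike.re (⟪Q y, y⟫ : ℂ) := by
      rw [hq', hexp]
      simp only [ContinuousLinearMap.add_apply, inner_add_left, map_add,
        ContinuousLinearMap.smul_apply, inner_smul_left, Complex.conj_ofReal]
      simp [Complex.re_ofReal_mul, ← Complex.ofReal_pow]
    have h3 : 0 ≤ RCLike.re (⟪(Q * (Q * Q)) y, y⟫ : ℂ) :=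
      ((ContinuousLinearMap.nonneg_iff_isPositive _).mp hq3).re_inner_nonneg_left y
    have h4 : 0 ≤ RCLike.re (⟪Q y, y⟫ : ℂ) := hQ.re_inner_nonneg_left y
    have happ5 : (Q * (Q * (Q * (Q * Q)))) y = Q (Q (Q (Q (Q y)))) := by
      simp [ContinuousLinearMap.mul_apply]
    have h5 : ‖star T x‖ ^ 2 ≤ q := by
      rw [h1, ← happ5]
      have e3 := mul_nonneg (by positivity : (0:ℝ) ≤ 2 * ε) h3
      have e4 := mul_nonneg (sq_nonneg ε) h4
      linarith [h2]
    calc ‖star T x‖ = Real.sqrt (‖star T x‖ ^ 2) := (Real.sqrt_sq (norm_nonneg _)).symm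
      _ ≤ Real.sqrt q := Real.sqrt_le_sqrt h5
  -- combine
  calc ‖(⟪A x, x⟫ : ℂ)‖
      = ‖(⟪((A * vP) * (P * P)) x, x⟫ : ℂ) + ⟪(c • (A * vP)) x, x⟫‖ := by rw [hsplit]
    _ ≤ ‖(⟪((A * vP) * (P * P)) x, x⟫ : ℂ)‖ + ‖(⟪(c • (A * vP)) x, x⟫ : ℂ)‖ := norm_add_le _ _
    _ ≤ Real.sqrt p * Real.sqrt q + Real.sqrt ε / 2 := by
        refine add_le_add ?_ hterm2
        rw [ht1a]
        calc ‖(⟪R x, star T x⟫ : ℂ)‖ ≤ ‖R x‖ * ‖star T x‖ := norm_inner_le_norm _ _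
          _ ≤ Real.sqrt p * Real.sqrt q := by
              rw [hRxnorm]
              exact mul_le_mul_of_nonneg_left hTxnorm (Real.sqrt_nonneg _)

end Core

/-- The numerical radius of a bounded operator. -/
noncomputable def numRad {H : Type*} [NormedAddCommGroup H] [InnerProductSpace ℂ H]
    (A : H →L[ℂ] H) : ℝ :=
  sSup {r : ℝ | ∃ x : H, ‖x‖ = 1 ∧ r = ‖(inner ℂ (A x) x : ℂ)‖}

theorem numRad_sq_le_with_geomean {H : Type*} [NormedAddCommGroup H] [InnerProductSpace ℂ H]
    [CompleteSpace H] (A P Q : H →L[ℂ] H)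
    (hP : P.IsPositive) (hP2 : P * P = adjoint A * A)
    (hQ : Q.IsPositive) (hQ2 : Q * Q = A * adjoint A) :
    numRad A ^ 2 ≤ (1 / 4) * ‖adjoint A * A + A * adjoint A‖ + (1 / 2) * numRad (P * Q) := by
  have hPsa : IsSelfAdjoint P := hP.isSelfAdjoint
  have hPadj : adjoint P = P := hPsa.adjoint_eq
  have hQadj : adjoint Q = Q := hQ.isSelfAdjoint.adjoint_eq
  have Psym : ∀ z w : H, (inner ℂ (P z) w : ℂ) = inner ℂ z (P w) := fun z w => by
    conv_lhs => rw [← hPadj]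
    exact adjoint_inner_left P w z
  set K := (1 / 4) * ‖adjoint A * A + A * adjoint A‖ + (1 / 2) * numRad (P * Q) with hK
  have hPQ0 : 0 ≤ numRad (P * Q) := by
    apply Real.sSup_nonneg
    rintro r ⟨x, hx, rfl⟩
    exact norm_nonneg _
  have hK0 : 0 ≤ K := by
    rw [hK]
    have : (0:ℝ) ≤ ‖adjoint A * A + A * adjoint A‖ := norm_nonneg _
    linarith
  have hmem : ∀ x : H, ‖x‖ = 1 → ‖(inner ℂ ((P * Q) x) x : ℂ)‖ ≤ numRad (P * Q) := by
    intro x hx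
    apply le_csSup
    · refine ⟨‖P * Q‖, ?_⟩
      rintro r ⟨w, hw, rfl⟩
      calc ‖(inner ℂ ((P * Q) w) w : ℂ)‖ ≤ ‖(P * Q) w‖ * ‖w‖ := norm_inner_le_norm _ _
        _ ≤ ‖P * Q‖ * ‖w‖ * ‖w‖ := by gcongr; exact (P * Q).le_opNorm w
        _ = ‖P * Q‖ := by rw [hw]; ring
    · exact ⟨x, hx, rfl⟩
  have key : ∀ x : H, ‖x‖ = 1 → ‖(inner ℂ (A x) x : ℂ)‖ ^ 2 ≤ K := by
    intro x hx
    have hms := mixed_schwarz A P Q hP hP2 hQ hQ2 x hx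
    set p := RCLike.re (inner ℂ (P x) x : ℂ) with hp
    set q := RCLike.re (inner ℂ (Q x) x : ℂ) with hq
    have hpc : ((p : ℝ) : ℂ) = inner ℂ (P x) x := ((isPositive_iff_complex P).mp hP x).1
    have hqc : ((q : ℝ) : ℂ) = inner ℂ (Q x) x := ((isPositive_iff_complex Q).mp hQ x).1
    have hp0 : 0 ≤ p := hP.re_inner_nonneg_left x
    have hq0 : 0 ≤ q := hQ.re_inner_nonneg_left x
    have hbz := buzano (P x) (Q x) x hx
    have e1 : (inner ℂ x (Q x) : ℂ) = (q : ℂ) := by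
      rw [← inner_conj_symm, ← hqc, Complex.conj_ofReal]
    have e2 : p * q = ‖(inner ℂ (P x) x : ℂ) * (inner ℂ x (Q x) : ℂ)‖ := by
      rw [← hpc, e1, norm_mul, Complex.norm_real, Complex.norm_real,
        Real.norm_of_nonneg hp0, Real.norm_of_nonneg hq0]
    have e3 : ‖(inner ℂ (P x) (Q x) : ℂ)‖ = ‖(inner ℂ ((P * Q) x) x : ℂ)‖ := by
      have h := Psym (Q x) x
      rw [ContinuousLinearMap.mul_apply, h, ← inner_conj_symm (P x) (Q x)]
      exact RCLike.norm_conj _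
    have e4 : ‖P x‖ ^ 2 + ‖Q x‖ ^ 2 ≤ ‖adjoint A * A + A * adjoint A‖ := by
      have f1 : (inner ℂ (P x) (P x) : ℂ) = inner ℂ ((P * P) x) x := by
        rw [ContinuousLinearMap.mul_apply, Psym (P x) x]
      have f1' : ‖P x‖ ^ 2 = RCLike.re (inner ℂ ((P * P) x) x : ℂ) := by
        rw [← f1, inner_self_eq_norm_sq]
      have f2 : (inner ℂ (Q x) (Q x) : ℂ) = inner ℂ ((Q * Q) x) x := by
        have Qsym : ∀ z w : H, (inner ℂ (Q z) w : ℂ) = inner ℂ z (Q w) := fun z w => by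
          conv_lhs => rw [← hQadj]
          exact adjoint_inner_left Q w z
        rw [ContinuousLinearMap.mul_apply, Qsym (Q x) x]
      have f2' : ‖Q x‖ ^ 2 = RCLike.re (inner ℂ ((Q * Q) x) x : ℂ) := by
        rw [← f2, inner_self_eq_norm_sq]
      have f3 : RCLike.re (inner ℂ ((P * P) x) x : ℂ) + RCLike.re (inner ℂ ((Q * Q) x) x : ℂ)
          = RCLike.re (inner ℂ ((adjoint A * A + A * adjoint A) x) x : ℂ) := by
        rw [← hP2, ← hQ2]
        simp [ContinuousLinearMap.add_apply, inner_add_left]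
      have f4 : RCLike.re (inner ℂ ((adjoint A * A + A * adjoint A) x) x : ℂ)
          ≤ ‖adjoint A * A + A * adjoint A‖ := by
        calc RCLike.re (inner ℂ ((adjoint A * A + A * adjoint A) x) x : ℂ)
            ≤ ‖(inner ℂ ((adjoint A * A + A * adjoint A) x) x : ℂ)‖ := RCLike.re_le_norm _
          _ ≤ ‖(adjoint A * A + A * adjoint A) x‖ * ‖x‖ := norm_inner_le_norm _ _
          _ ≤ ‖adjoint A * A + A * adjoint A‖ * ‖x‖ * ‖x‖ := by
              gcongr; exact (adjoint A * A + A * adjoint A).le_opNorm x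
          _ = ‖adjoint A * A + A * adjoint A‖ := by rw [hx]; ring
      rw [f1', f2']
      linarith [f3, f4]
    have h6 : ‖P x‖ * ‖Q x‖ ≤ (‖P x‖ ^ 2 + ‖Q x‖ ^ 2) / 2 := by
      nlinarith [sq_nonneg (‖P x‖ - ‖Q x‖)]
    have h7 := hmem x hx
    calc ‖(inner ℂ (A x) x : ℂ)‖ ^ 2 ≤ p * q := hms
      _ = ‖(inner ℂ (P x) x : ℂ) * (inner ℂ x (Q x) : ℂ)‖ := e2
      _ ≤ (‖P x‖ * ‖Q x‖ + ‖(inner ℂ (P x) (Q x) : ℂ)‖) / 2 := hbz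
      _ ≤ K := by rw [hK, e3] at *; linarith
  have h7 : numRad A ≤ Real.sqrt K := by
    apply Real.sSup_le _ (Real.sqrt_nonneg K)
    rintro r ⟨x, hx, rfl⟩
    have h := key x hx
    nlinarith [Real.sq_sqrt hK0, Real.sqrt_nonneg K,
      norm_nonneg (inner ℂ (A x) x : ℂ),
      sq_nonneg (‖(inner ℂ (A x) x : ℂ)‖ - Real.sqrt K),
      sq_nonneg (‖(inner ℂ (A x) x : ℂ)‖ + Real.sqrt K)]
  have h8 : 0 ≤ numRad A := by
    apply Real.sSup_nonneg
    rintro r ⟨x, hx, rfl⟩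
    exact norm_nonneg _
  calc numRad A ^ 2 ≤ Real.sqrt K ^ 2 := by gcongr
    _ = K := Real.sq_sqrt hK0
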